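/- Any graph containing a 6-cycle and having minimum degree at least 10 contains a copy of the graph F. -/

import Mathlib

open SimpleGraph

/-- `G` contains a copy of `H` (a subgraph isomorphic to `H`). -/
def Contains {V W : Type*} (G : SimpleGraph V) (H : SimpleGraph W) : Prop :=
  ∃ f : W → V, Function.Injective f ∧ ∀ ⦃a b : W⦄, H.Adj a b → G.Adj (f a) (f b)

/-- `G` is `H`-free. -/
def Free {V W : Type*} (G : SimpleGraph V) (H : SimpleGraph W) : Prop :=
  ¬ Contains G H

/-- The number of edges of `G`. -/
noncomputable def eCard {V : Type*} (G : SimpleGraph V) : ℕ := Nat.card G.edgeSet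

/-- The Turán number `ex(n, H)`. -/
noncomputable def exNum (n : ℕ) {W : Type*} (H : SimpleGraph W) : ℕ :=
  sSup {m | ∃ G : SimpleGraph (Fin n), _root_.Free G H ∧ m = eCard G}

/-- The graph `F`: a path `x₁ ⋯ x₁₀` together with the chord `x₃x₈`. -/
def FGraph : SimpleGraph (Fin 10) :=
  SimpleGraph.fromRel (fun i j => (i.val + 1 = j.val) ∨ (i.val = 2 ∧ j.val = 7))

/-- Adjacency for the triangular pyramid: within a layer, or between consecutive layers. -/
def TPAdj (p q : ℕ × ℕ) : Prop :=
  (q.1 = p.1 ∧ q.2 = p.2 + 1) ∨ (q.1 = p.1 + 1 ∧ (q.2 = p.2 ∨ q.2 = p.2 + 1))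

/-- The triangular pyramid with `k` layers; vertex `(i, t)` is `yₜⁱ`. -/
def TP (k : ℕ) : SimpleGraph {p : ℕ × ℕ // 1 ≤ p.2 ∧ p.2 ≤ p.1 ∧ p.1 ≤ k + 1} :=
  SimpleGraph.fromRel (fun p q => TPAdj p.1 q.1)

noncomputable def crossCount {V : Type*} (G : SimpleGraph V) (A B : Set V) : ℕ :=
  Nat.card {p : V × V // p.1 ∈ A ∧ p.2 ∈ B ∧ G.Adj p.1 p.2}

lemma exists_nbr_avoid {V : Type*} [Fintype V] (G : SimpleGraph V)
    (hδ : ∀ v : V, 10 ≤ Nat.card (G.neighborSet v)) (v : V) (S : Finset V)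
    (hS : S.card ≤ 9) : ∃ u, G.Adj v u ∧ u ∉ S := by
  classical
  have h1 : 10 ≤ (G.neighborFinset v).card := by
    have := hδ v
    rwa [Nat.card_eq_fintype_card, G.card_neighborSet_eq_degree] at this
  have h2 : ¬ G.neighborFinset v ⊆ S := fun hsub => by
    have := Finset.card_le_card hsub; omega
  obtain ⟨u, hu, hus⟩ := Finset.not_subset.mp h2
  exact ⟨u, (G.mem_neighborFinset v u).mp hu, hus⟩

set_option maxHeartbeats 1600000 in
/-- Any graph containing a `6`-cycle and having minimum degree at least `10`
contains a copy of `F`. -/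
theorem stmt_4 {V : Type*} [Fintype V] (G : SimpleGraph V)
    (hC : Contains G (cycleGraph 6))
    (hδ : ∀ v : V, 10 ≤ Nat.card (G.neighborSet v)) :
    Contains G FGraph := by
  classical
  obtain ⟨g, hg, hadj⟩ := hC
  have cyc : ∀ a b : Fin 6, (cycleGraph 6).Adj a b → G.Adj (g a) (g b) := fun a b h => hadj h
  set C : Finset V := (Finset.univ : Finset (Fin 6)).image g with hc
  have hCcard : C.card ≤ 6 := le_trans Finset.card_image_le (by simp)
  obtain ⟨u1, hu1, hu1n⟩ := exists_nbr_avoid G hδ (g 0) C (by omega)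
  obtain ⟨u2, hu2, hu2n⟩ := exists_nbr_avoid G hδ u1 (insert u1 C)
    (le_trans (Finset.card_insert_le _ _) (by omega))
  obtain ⟨w1, hw1, hw1n⟩ := exists_nbr_avoid G hδ (g 5) (insert u1 (insert u2 C)) (by
    have := Finset.card_insert_le u1 (insert u2 C)
    have := Finset.card_insert_le u2 C
    omega)
  obtain ⟨w2, hw2, hw2n⟩ := exists_nbr_avoid G hδ w1 (insert w1 (insert u1 (insert u2 C))) (by
    have := Finset.card_insert_le w1 (insert u1 (insert u2 C))
    have := Finset.card_insert_le u1 (insert u2 C)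
    have := Finset.card_insert_le u2 C
    omega)
  have gin : ∀ i : Fin 6, g i ∈ C := fun i => Finset.mem_image_of_mem g (Finset.mem_univ i)
  simp only [Finset.mem_insert, not_or] at hu2n hw1n hw2n
  have hgne : ∀ i j : Fin 6, i ≠ j → g i ≠ g j := fun i j h hh => h (hg hh)
  have h1 : ∀ i, u1 ≠ g i := fun i h => hu1n (h ▸ gin i)
  have h2 : ∀ i, u2 ≠ g i := fun i h => hu2n.2 (h ▸ gin i)
  have h3 : ∀ i, w1 ≠ g i := fun i h => hw1n.2.2 (h ▸ gin i)
  have h4 : ∀ i, w2 ≠ g i := fun i h => hw2n.2.2.2 (h ▸ gin i)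
  have h5 : u2 ≠ u1 := hu2n.1
  have h6 : w1 ≠ u1 := hw1n.1
  have h7 : w1 ≠ u2 := hw1n.2.1
  have h8 : w2 ≠ w1 := hw2n.1
  have h9 : w2 ≠ u1 := hw2n.2.1
  have h10 : w2 ≠ u2 := hw2n.2.2.1
  refine ⟨![u2, u1, g 0, g 1, g 2, g 3, g 4, g 5, w1, w2], ?_, ?_⟩
  · rw [← List.nodup_ofFn]
    simp only [List.ofFn_succ, Fin.isValue, Matrix.cons_val_zero, Matrix.cons_val_succ,
      List.ofFn_zero, Matrix.cons_val_one, Matrix.head_cons]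
    simp only [List.nodup_cons, List.mem_cons, List.not_mem_nil, List.nodup_nil, or_false,
      not_or, and_true]
    refine ⟨⟨h5, h2 0, h2 1, h2 2, h2 3, h2 4, h2 5, (h7 ·.symm), (h10 ·.symm)⟩,
      ⟨h1 0, h1 1, h1 2, h1 3, h1 4, h1 5, (h6 ·.symm), (h9 ·.symm)⟩,
      ⟨hgne 0 1 (by decide), hgne 0 2 (by decide), hgne 0 3 (by decide), hgne 0 4 (by decide),
        hgne 0 5 (by decide), (h3 0 ·.symm), (h4 0 ·.symm)⟩,
      ⟨hgne 1 2 (by decide), hgne 1 3 (by decide), hgne 1 4 (by decide), hgne 1 5 (by decide),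
        (h3 1 ·.symm), (h4 1 ·.symm)⟩,
      ⟨hgne 2 3 (by decide), hgne 2 4 (by decide), hgne 2 5 (by decide),
        (h3 2 ·.symm), (h4 2 ·.symm)⟩,
      ⟨hgne 3 4 (by decide), hgne 3 5 (by decide), (h3 3 ·.symm), (h4 3 ·.symm)⟩,
      ⟨hgne 4 5 (by decide), (h3 4 ·.symm), (h4 4 ·.symm)⟩,
      ⟨(h3 5 ·.symm), (h4 5 ·.symm)⟩, ⟨h8.symm, not_false⟩⟩
  · set f : Fin 10 → V := ![u2, u1, g 0, g 1, g 2, g 3, g 4, g 5, w1, w2] with hf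
    have a0 : G.Adj (f 0) (f 1) := hu2.symm
    have a1 : G.Adj (f 1) (f 2) := hu1.symm
    have a2 : G.Adj (f 2) (f 3) := cyc 0 1 (by decide)
    have a3 : G.Adj (f 3) (f 4) := cyc 1 2 (by decide)
    have a4 : G.Adj (f 4) (f 5) := cyc 2 3 (by decide)
    have a5 : G.Adj (f 5) (f 6) := cyc 3 4 (by decide)
    have a6 : G.Adj (f 6) (f 7) := cyc 4 5 (by decide)
    have a7 : G.Adj (f 7) (f 8) := hw1
    have a8 : G.Adj (f 8) (f 9) := hw2
    have a9 : G.Adj (f 2) (f 7) := cyc 0 5 (by decide)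
    have key : ∀ a b : Fin 10, a.val + 1 = b.val ∨ (a.val = 2 ∧ b.val = 7) →
        G.Adj (f a) (f b) := by
      intro a b h
      fin_cases a <;> fin_cases b <;>
        first
          | exact absurd h (by decide)
          | exact a0 | exact a1 | exact a2 | exact a3 | exact a4
          | exact a5 | exact a6 | exact a7 | exact a8 | exact a9
    intro a b hab
    rw [FGraph, fromRel_adj] at hab
    rcases hab with ⟨hne, hh | hh⟩
    · exact key a b hh
    · exact (key b a hh).symm
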